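/- Let f : G₁ → G₂ be a surjective Γ-equivariant homomorphism of reductive algebraic groups that is non-degenerate, i.e., the identity component of ker f is a torus. Then Γ acts completely reducibly on G₁ if and only if Γ acts completely reducibly on G₂. -/
import Mathlib


open Pointwise

/-- Abstract data of the family of R-parabolic and R-Levi subgroups of a
(possibly non-connected) reductive algebraic group, indexed by (equivalence
classes of) cocharacters.  The field `opp` records the opposite cocharacter
`λ ↦ -λ`, for which `L_{-λ} = L_λ` and `P_λ ∩ P_{-λ} = L_λ`. -/
structure Cochars (G : Type*) [Group G] where
  Y : Type*
  P : Y → Subgroup G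
  L : Y → Subgroup G
  opp : Y → Y
  L_opp : ∀ lam, L (opp lam) = L lam
  P_inf_opp : ∀ lam, P lam ⊓ P (opp lam) = L lam

variable {G : Type*} [Group G]

/-- `Q` is an R-parabolic subgroup of `G`. -/
def IsRParabolic (S : Cochars G) (Q : Subgroup G) : Prop := ∃ lam, Q = S.P lam

/-- `M` is an R-Levi subgroup of the R-parabolic subgroup `Q` of `G`. -/
def IsRLeviOf (S : Cochars G) (M Q : Subgroup G) : Prop :=
  ∃ lam, Q = S.P lam ∧ M = S.L lam

/-- Two R-parabolic subgroups are opposite if their intersection is an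
R-Levi subgroup of each of them. -/
def OppositeR (S : Cochars G) (Q R : Subgroup G) : Prop :=
  IsRLeviOf S (Q ⊓ R) Q ∧ IsRLeviOf S (Q ⊓ R) R

/-- A subgroup of `G` is stable under the action of `Γ`. -/
def GammaStable (Γ : Type*) [Group Γ] [MulDistribMulAction Γ G] (Q : Subgroup G) : Prop :=
  ∀ γ : Γ, γ • Q = Q

/-- The action of `Γ` on `G` is completely reducible: every `Γ`-stable
R-parabolic subgroup of `G` has a `Γ`-stable opposite R-parabolic subgroup. -/
def CRAction (S : Cochars G) (Γ : Type*) [Group Γ] [MulDistribMulAction Γ G] : Prop :=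
  ∀ Q : Subgroup G, IsRParabolic S Q → GammaStable Γ Q →
    ∃ R : Subgroup G, IsRParabolic S R ∧ GammaStable Γ R ∧ OppositeR S Q R

/-- `H` is `G`-completely reducible: whenever `H ≤ P_λ`, there is `μ` with
`P_μ = P_λ` and `H ≤ L_μ`. -/
def IsGCr (S : Cochars G) (H : Subgroup G) : Prop :=
  ∀ lam : S.Y, H ≤ S.P lam → ∃ mu : S.Y, S.P mu = S.P lam ∧ H ≤ S.L mu

section Aux

variable {G₁ G₂ : Type*} [Group G₁] [Group G₂]
variable {Γ : Type*} [Group Γ] [MulDistribMulAction Γ G₁] [MulDistribMulAction Γ G₂]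
variable {f : G₁ →* G₂}

lemma gammaStable_map_aux (hequiv : ∀ (γ : Γ) (g : G₁), f (γ • g) = γ • f g)
    {Q : Subgroup G₁} (hQ : GammaStable Γ Q) : GammaStable Γ (Q.map f) := by
  intro γ
  ext y
  rw [Subgroup.mem_pointwise_smul_iff_inv_smul_mem, Subgroup.mem_map, Subgroup.mem_map]
  constructor
  · rintro ⟨x, hx, hfx⟩
    refine ⟨γ • x, ?_, ?_⟩
    · rw [← hQ γ]; exact Subgroup.smul_mem_pointwise_smul _ _ _ hx
    · rw [hequiv, hfx, smul_inv_smul]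
  · rintro ⟨x, hx, hfx⟩
    refine ⟨γ⁻¹ • x, ?_, ?_⟩
    · rw [← hQ γ⁻¹]; exact Subgroup.smul_mem_pointwise_smul _ _ _ hx
    · rw [hequiv, hfx]

lemma gammaStable_comap_aux (hequiv : ∀ (γ : Γ) (g : G₁), f (γ • g) = γ • f g)
    {Q : Subgroup G₂} (hQ : GammaStable Γ Q) : GammaStable Γ (Q.comap f) := by
  intro γ
  ext x
  rw [Subgroup.mem_pointwise_smul_iff_inv_smul_mem, Subgroup.mem_comap, Subgroup.mem_comap,
    hequiv, ← Subgroup.mem_pointwise_smul_iff_inv_smul_mem, hQ γ]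

lemma map_inf_of_ker_le {A B : Subgroup G₁} (h : f.ker ≤ B) :
    (A ⊓ B).map f = A.map f ⊓ B.map f := by
  refine le_antisymm (le_inf (Subgroup.map_mono inf_le_left)
    (Subgroup.map_mono inf_le_right)) ?_
  rintro y ⟨⟨a, ha, rfl⟩, ⟨b, hb, hfb⟩⟩
  have hk : b⁻¹ * a ∈ f.ker := by
    rw [MonoidHom.mem_ker, map_mul, map_inv, hfb, inv_mul_cancel]
  have haB : a ∈ B := by
    have := B.mul_mem hb (h hk)
    rwa [mul_inv_cancel_left] at this
  exact ⟨a, ⟨ha, haB⟩, rfl⟩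

lemma L_le_P (S : Cochars G₁) (lam : S.Y) : S.L lam ≤ S.P lam :=
  (S.P_inf_opp lam) ▸ inf_le_left

end Aux

/-- **Lemma 2.1(ii).** Let `f : G₁ → G₂` be a surjective `Γ`-equivariant
homomorphism of reductive algebraic groups which is non-degenerate (the
identity component of `ker f` is a torus; consequently `ker f` lies in every
R-Levi subgroup of `G₁` (`hker`), and preimages of R-parabolic resp. R-Levi
subgroups of `G₂` are R-parabolic resp. R-Levi subgroups of `G₁` (`hcomap`)).
Then `Γ` acts completely reducibly on `G₁` if and only if it does on `G₂`. -/
theorem cr_action_iff_of_nondegenerate_surjection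
    {G₁ G₂ : Type*} [Group G₁] [Group G₂]
    (Γ : Type*) [Group Γ] [MulDistribMulAction Γ G₁] [MulDistribMulAction Γ G₂]
    (S₁ : Cochars G₁) (S₂ : Cochars G₂)
    (f : G₁ →* G₂) (hsurj : Function.Surjective f)
    (hequiv : ∀ (γ : Γ) (g : G₁), f (γ • g) = γ • f g)
    (φ : S₁.Y → S₂.Y)
    (hP : ∀ lam, (S₁.P lam).map f = S₂.P (φ lam))
    (hL : ∀ lam, (S₁.L lam).map f = S₂.L (φ lam))
    (hlift : ∀ mu : S₂.Y, ∃ lam : S₁.Y,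
      S₂.P (φ lam) = S₂.P mu ∧ S₂.L (φ lam) = S₂.L mu)
    -- non-degeneracy of `f`:
    (hker : ∀ lam : S₁.Y, f.ker ≤ S₁.L lam)
    (hcomap : ∀ mu : S₂.Y, ∃ lam : S₁.Y,
      S₁.P lam = (S₂.P mu).comap f ∧ S₁.L lam = (S₂.L mu).comap f) :
    CRAction S₁ Γ ↔ CRAction S₂ Γ := by
  constructor
  · -- CR on G₁ implies CR on G₂
    rintro h₁ Q₂ ⟨μ, rfl⟩ hst
    obtain ⟨lam, hPlam, hLlam⟩ := hcomap μ
    have hQ₁st : GammaStable Γ (S₁.P lam) := by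
      rw [hPlam]; exact gammaStable_comap_aux hequiv hst
    obtain ⟨R₁, ⟨ν, rfl⟩, hR₁st, ⟨κ, hPκ, hLκ⟩, ⟨κ', hPκ', hLκ'⟩⟩ :=
      h₁ (S₁.P lam) ⟨lam, rfl⟩ hQ₁st
    have hmapP₁ : (S₁.P lam).map f = S₂.P μ := by
      rw [hPlam, Subgroup.map_comap_eq_self_of_surjective hsurj]
    have hkerν : f.ker ≤ S₁.P ν := hPκ' ▸ (hker κ').trans (L_le_P S₁ κ')
    have hinf : S₂.P μ ⊓ (S₁.P ν).map f = (S₁.P lam ⊓ S₁.P ν).map f := by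
      rw [map_inf_of_ker_le hkerν, hmapP₁]
    refine ⟨(S₁.P ν).map f, ⟨φ ν, by rw [hP ν]⟩, gammaStable_map_aux hequiv hR₁st, ?_, ?_⟩
    · exact ⟨φ κ, by rw [← hmapP₁, hPκ, hP], by rw [hinf, hLκ, hL]⟩
    · exact ⟨φ κ', by rw [hPκ', hP], by rw [hinf, hLκ', hL]⟩
  · -- CR on G₂ implies CR on G₁
    rintro h₂ Q₁ ⟨lam, rfl⟩ hst
    have hQ₂st : GammaStable Γ (S₂.P (φ lam)) := by
      rw [← hP lam]; exact gammaStable_map_aux hequiv hst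
    obtain ⟨R₂, ⟨μ, rfl⟩, hR₂st, ⟨κ, hQκ, hIκ⟩, ⟨κ', hRκ', hIκ'⟩⟩ :=
      h₂ (S₂.P (φ lam)) ⟨φ lam, rfl⟩ hQ₂st
    obtain ⟨ν, hPν, hLν⟩ := hcomap μ
    have hQcomap : (S₂.P (φ lam)).comap f = S₁.P lam := by
      rw [← hP lam, Subgroup.comap_map_eq,
        sup_eq_left.mpr ((hker lam).trans (L_le_P S₁ lam))]
    have hinf : S₁.P lam ⊓ S₁.P ν = (S₂.P (φ lam) ⊓ S₂.P μ).comap f := by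
      rw [Subgroup.comap_inf, hQcomap, hPν]
    obtain ⟨ρ, hPρ, hLρ⟩ := hcomap κ
    obtain ⟨ρ', hPρ', hLρ'⟩ := hcomap κ'
    refine ⟨S₁.P ν, ⟨ν, rfl⟩, ?_, ?_, ?_⟩
    · rw [hPν]; exact gammaStable_comap_aux hequiv hR₂st
    · exact ⟨ρ, by rw [hPρ, ← hQκ, hQcomap], by rw [hLρ, ← hIκ, hinf]⟩
    · exact ⟨ρ', by rw [hPρ', ← hRκ', hPν], by rw [hLρ', ← hIκ', hinf]⟩
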